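/- For arbitrary input |φ⟩ = α|0⟩ + β|1⟩, the output of the universal 1→2 cloner can be written as U|φ⟩|00⟩ = (1/√3)|φ⁺⟩(−β|0⟩+α|1⟩) + (1/√3)|φ⁻⟩(β|0⟩+α|1⟩) + (1/√3)|ψ⁺⟩(−α|0⟩+β|1⟩), where the Bell states are on the two clones and the last qubit is the ancilla. Consequently, a projective measurement on the two clones in the Bell basis yields each of the three symmetric Bell outcomes with probability 1/3, and in each case there is a unitary W (iσ_y, σ_x, −σ_z respectively) such that W applied to the ancilla's conditional state recovers |φ⟩. -/
import Mathlib


open scoped ComplexConjugate ComplexOrder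
open Finset Matrix

noncomputable section

/-- Index set for three qubits: (clone 1, clone 2, ancilla). -/
abbrev I3 := Fin 2 × Fin 2 × Fin 2

/-- Image of |0⟩|00⟩ under the universal 1→2 cloner:
    √(2/3)|00⟩|1⟩ − (1/√6)(|01⟩+|10⟩)|0⟩. -/
def out0 : I3 → ℂ := fun p =>
  if p = (0, 0, 1) then ((Real.sqrt (2/3) : ℝ) : ℂ)
  else if p = (0, 1, 0) then -(((1 / Real.sqrt 6 : ℝ)) : ℂ)
  else if p = (1, 0, 0) then -(((1 / Real.sqrt 6 : ℝ)) : ℂ)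
  else 0

/-- Image of |1⟩|00⟩ under the universal 1→2 cloner:
    −√(2/3)|11⟩|0⟩ + (1/√6)(|10⟩+|01⟩)|1⟩. -/
def out1 : I3 → ℂ := fun p =>
  if p = (1, 1, 0) then -((Real.sqrt (2/3) : ℝ) : ℂ)
  else if p = (1, 0, 1) then (((1 / Real.sqrt 6 : ℝ)) : ℂ)
  else if p = (0, 1, 1) then (((1 / Real.sqrt 6 : ℝ)) : ℂ)
  else 0

/-- Output of the cloner on input α|0⟩+β|1⟩. -/
def cloneOut (α β : ℂ) : I3 → ℂ := fun p => α * out0 p + β * out1 p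

/-- Output density matrix U(|φ⟩⟨φ| ⊗ |00⟩⟨00|)U†. -/
def rhoOut (α β : ℂ) : Matrix I3 I3 ℂ :=
  Matrix.of fun p q => cloneOut α β p * conj (cloneOut α β q)

/-- Reduced state of the first clone. -/
def rhoC (α β : ℂ) : Matrix (Fin 2) (Fin 2) ℂ :=
  Matrix.of fun i j => ∑ b : Fin 2, ∑ c : Fin 2, rhoOut α β (i, b, c) (j, b, c)

/-- Reduced state of the ancilla. -/
def rhoA (α β : ℂ) : Matrix (Fin 2) (Fin 2) ℂ :=
  Matrix.of fun i j => ∑ a : Fin 2, ∑ b : Fin 2, rhoOut α β (a, b, i) (a, b, j)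

/-- Reduced state of the two clones. -/
def rhoCC (α β : ℂ) : Matrix (Fin 2 × Fin 2) (Fin 2 × Fin 2) ℂ :=
  Matrix.of fun p q => ∑ c : Fin 2, rhoOut α β (p.1, p.2, c) (q.1, q.2, c)

def σx : Matrix (Fin 2) (Fin 2) ℂ := !![0, 1; 1, 0]
def σy : Matrix (Fin 2) (Fin 2) ℂ := !![0, -Complex.I; Complex.I, 0]
def σz : Matrix (Fin 2) (Fin 2) ℂ := !![1, 0; 0, -1]

/-- s·σ for a real 3-vector s. -/
def pauliDot (s : Fin 3 → ℝ) : Matrix (Fin 2) (Fin 2) ℂ :=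
  ((s 0 : ℝ) : ℂ) • σx + ((s 1 : ℝ) : ℂ) • σy + ((s 2 : ℝ) : ℂ) • σz

/-- (1/2)(I + s·σ), the state with Bloch vector s. -/
def blochMat (s : Fin 3 → ℝ) : Matrix (Fin 2) (Fin 2) ℂ :=
  (1/2 : ℂ) • (1 + pauliDot s)

def φvec (α β : ℂ) : Fin 2 → ℂ := ![α, β]

/-- Outer product |v⟩⟨v| on a qubit. -/
def outer (v : Fin 2 → ℂ) : Matrix (Fin 2) (Fin 2) ℂ :=
  Matrix.of fun i j => v i * conj (v j)

/-- The images U(|i⟩|00⟩) of the two input basis states. -/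
def Uout : Fin 2 → I3 → ℂ := ![out0, out1]

/-- Effective operator on the input qubit corresponding to an operator F on the output:
    E i j = ⟨U(|i⟩|00⟩)| F |U(|j⟩|00⟩)⟩ = (⟨00|_{ba} U† F U |00⟩_{ba}) i j. -/
def effOf (F : Matrix I3 I3 ℂ) : Matrix (Fin 2) (Fin 2) ℂ :=
  Matrix.of fun i j => ∑ p : I3, ∑ q : I3, conj (Uout i p) * F p q * Uout j q

/-- F ⊗ I ⊗ I: a measurement on the first clone only. -/
def extC (F : Matrix (Fin 2) (Fin 2) ℂ) : Matrix I3 I3 ℂ :=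
  Matrix.of fun p q => F p.1 q.1 * (if p.2 = q.2 then 1 else 0)

/-- I ⊗ I ⊗ F: a measurement on the ancilla only. -/
def extA (F : Matrix (Fin 2) (Fin 2) ℂ) : Matrix I3 I3 ℂ :=
  Matrix.of fun p q => (if (p.1, p.2.1) = (q.1, q.2.1) then 1 else 0) * F p.2.2 q.2.2

/-- F ⊗ I_ancilla: a measurement on the two clones. -/
def extCC (F : Matrix (Fin 2 × Fin 2) (Fin 2 × Fin 2) ℂ) : Matrix I3 I3 ℂ :=
  Matrix.of fun p q => F (p.1, p.2.1) (q.1, q.2.1) * (if p.2.2 = q.2.2 then 1 else 0)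

/-- Bell basis on two qubits, in the order φ⁺, ψ⁺, φ⁻, ψ⁻. -/
def bell : Fin 4 → (Fin 2 × Fin 2) → ℂ :=
  ![fun p => if p = (0,0) then ((1 / Real.sqrt 2 : ℝ) : ℂ)
             else if p = (1,1) then ((1 / Real.sqrt 2 : ℝ) : ℂ) else 0,
    fun p => if p = (0,1) then ((1 / Real.sqrt 2 : ℝ) : ℂ)
             else if p = (1,0) then ((1 / Real.sqrt 2 : ℝ) : ℂ) else 0,
    fun p => if p = (0,0) then ((1 / Real.sqrt 2 : ℝ) : ℂ)
             else if p = (1,1) then -((1 / Real.sqrt 2 : ℝ) : ℂ) else 0,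
    fun p => if p = (0,1) then ((1 / Real.sqrt 2 : ℝ) : ℂ)
             else if p = (1,0) then -((1 / Real.sqrt 2 : ℝ) : ℂ) else 0]

/-- Kronecker product of two single-qubit matrices. -/
def kron2 (A B : Matrix (Fin 2) (Fin 2) ℂ) : Matrix (Fin 2 × Fin 2) (Fin 2 × Fin 2) ℂ :=
  Matrix.of fun p q => A p.1 q.1 * B p.2 q.2

/-- Projector onto the symmetric subspace of two qubits: I − |ψ⁻⟩⟨ψ⁻|. -/
def symProj : Matrix (Fin 2 × Fin 2) (Fin 2 × Fin 2) ℂ :=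
  1 - Matrix.of fun p q => bell 3 p * conj (bell 3 q)

/-- Projector onto the antisymmetric subspace: |ψ⁻⟩⟨ψ⁻|. -/
def antiProj : Matrix (Fin 2 × Fin 2) (Fin 2 × Fin 2) ℂ :=
  Matrix.of fun p q => bell 3 p * conj (bell 3 q)

/-- Computational basis vector |abc⟩ of three qubits. -/
def e3 (a b c : Fin 2) : I3 → ℂ := fun p => if p = (a, b, c) then 1 else 0

/-- ∑ₚ conj(v p) w p, the inner product on three qubits. -/
def inner3 (v w : I3 → ℂ) : ℂ := ∑ p : I3, conj (v p) * w p

/-- Unnormalized conditional ancilla state after Bell outcome k on the two clones. -/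
def condAnc (α β : ℂ) (k : Fin 4) : Fin 2 → ℂ :=
  fun c => ∑ a : Fin 2, ∑ b : Fin 2, conj (bell k (a, b)) * cloneOut α β (a, b, c)

set_option maxHeartbeats 1600000 in
/-- the cloner output decomposes over the Bell basis of the two clones as
(1/√3)[φ⁺(−β|0⟩+α|1⟩) + φ⁻(β|0⟩+α|1⟩) + ψ⁺(−α|0⟩+β|1⟩)]; each symmetric Bell outcome
occurs with probability 1/3, and iσ_y, σ_x, −σ_z respectively restore |φ⟩ on the ancilla. -/
theorem bell_measurement_restores_ancilla (α β : ℂ)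
    (hnorm : Complex.normSq α + Complex.normSq β = 1) :
    (∀ p : I3, cloneOut α β p =
      ((1 / Real.sqrt 3 : ℝ) : ℂ) *
        (bell 0 (p.1, p.2.1) * (![-β, α] p.2.2) +
         bell 2 (p.1, p.2.1) * (![β, α] p.2.2) +
         bell 1 (p.1, p.2.1) * (![-α, β] p.2.2))) ∧
    (∀ k : Fin 4, k ≠ 3 → ∑ c : Fin 2, Complex.normSq (condAnc α β k c) = 1/3) ∧
    (Complex.I • σy).mulVec (condAnc α β 0) = ((1 / Real.sqrt 3 : ℝ) : ℂ) • φvec α β ∧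
    σx.mulVec (condAnc α β 2) = ((1 / Real.sqrt 3 : ℝ) : ℂ) • φvec α β ∧
    (-σz).mulVec (condAnc α β 1) = ((1 / Real.sqrt 3 : ℝ) : ℂ) • φvec α β :=  by
  have h2 : (Real.sqrt 2 : ℂ) * (Real.sqrt 2 : ℂ) = 2 := by
    norm_cast; exact Real.mul_self_sqrt (by norm_num)
  have h3 : (Real.sqrt 3 : ℂ) * (Real.sqrt 3 : ℂ) = 3 := by
    norm_cast; exact Real.mul_self_sqrt (by norm_num)
  have h6 : ((Real.sqrt 6 : ℝ) : ℂ) = (Real.sqrt 2 : ℂ) * (Real.sqrt 3 : ℂ) := by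
    norm_cast
    rw [show (6:ℝ) = 2*3 by norm_num, Real.sqrt_mul (by norm_num : (0:ℝ) ≤ 2)]
  have p2 : (Real.sqrt 2 : ℂ) ^ 2 = 2 := by rw [sq]; exact h2
  have p3 : (Real.sqrt 3 : ℂ) ^ 2 = 3 := by rw [sq]; exact h3
  have p4 : (Real.sqrt 2 : ℂ) ^ 4 = 4 := by
    rw [show ((Real.sqrt 2 : ℝ) : ℂ) ^ 4 = (((Real.sqrt 2 : ℝ) : ℂ) ^ 2) ^ 2 by ring, p2]
    norm_num
  have p5 : (Real.sqrt 3 : ℂ) ^ 4 = 9 := by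
    rw [show ((Real.sqrt 3 : ℝ) : ℂ) ^ 4 = (((Real.sqrt 3 : ℝ) : ℂ) ^ 2) ^ 2 by ring, p3]
    norm_num
  have p6 : (Real.sqrt 2 : ℂ) ^ 3 = 2 * (Real.sqrt 2 : ℂ) := by
    rw [show ((Real.sqrt 2 : ℝ) : ℂ) ^ 3 = (((Real.sqrt 2 : ℝ) : ℂ) ^ 2) * _ by ring, p2]
  have p7 : (Real.sqrt 3 : ℂ) ^ 3 = 3 * (Real.sqrt 3 : ℂ) := by
    rw [show ((Real.sqrt 3 : ℝ) : ℂ) ^ 3 = (((Real.sqrt 3 : ℝ) : ℂ) ^ 2) * _ by ring, p3]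
  have n2 : (Real.sqrt 2 : ℂ) ≠ 0 := by
    simpa using Complex.ofReal_ne_zero.mpr (by positivity : Real.sqrt 2 ≠ 0)
  have n3 : (Real.sqrt 3 : ℂ) ≠ 0 := by
    simpa using Complex.ofReal_ne_zero.mpr (by positivity : Real.sqrt 3 ≠ 0)
  have e0 : condAnc α β 0 = fun c => ((1 / Real.sqrt 3 : ℝ) : ℂ) * ![-β, α] c := by
    funext c
    fin_cases c <;>
      simp [condAnc, Fin.sum_univ_two, cloneOut, out0, out1, bell, Prod.ext_iff, h6,
        Complex.conj_ofReal] <;>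
      field_simp <;> ring_nf <;> (try simp only [p2, p3, p4, p5, p6, p7]) <;> (try norm_num) <;>
      (try ring)
  have e1 : condAnc α β 1 = fun c => ((1 / Real.sqrt 3 : ℝ) : ℂ) * ![-α, β] c := by
    funext c
    fin_cases c <;>
      simp [condAnc, Fin.sum_univ_two, cloneOut, out0, out1, bell, Prod.ext_iff, h6,
        Complex.conj_ofReal] <;>
      field_simp <;> ring_nf <;> (try simp only [p2, p3, p4, p5, p6, p7]) <;> (try norm_num) <;>
      (try ring)
  have e2 : condAnc α β 2 = fun c => ((1 / Real.sqrt 3 : ℝ) : ℂ) * ![β, α] c := by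
    funext c
    fin_cases c <;>
      simp [condAnc, Fin.sum_univ_two, cloneOut, out0, out1, bell, Prod.ext_iff, h6,
        Complex.conj_ofReal] <;>
      field_simp <;> ring_nf <;> (try simp only [p2, p3, p4, p5, p6, p7]) <;> (try norm_num) <;>
      (try ring)
  have r3 : (1 / Real.sqrt 3) * (1 / Real.sqrt 3) = 1/3 := by
    rw [div_mul_div_comm, one_mul, Real.mul_self_sqrt (by norm_num)]
  refine ⟨?_, ?_, ?_, ?_, ?_⟩
  · rintro ⟨a, b, c⟩
    fin_cases a <;> fin_cases b <;> fin_cases c <;>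
      simp [cloneOut, out0, out1, bell, Prod.ext_iff, h6] <;>
      field_simp <;> ring_nf <;> (try simp only [p2, p3, p4, p5, p6, p7]) <;> (try norm_num) <;>
      (try ring)
  · intro k hk
    have hv : k = 0 ∨ k = 1 ∨ k = 2 := by omega
    rcases hv with rfl | rfl | rfl
    · rw [e0]
      simp only [Fin.sum_univ_two, Complex.normSq_mul, Complex.normSq_ofReal,
        Matrix.cons_val_zero, Matrix.cons_val_one, Matrix.head_cons, Complex.normSq_neg, r3]
      linarith
    · rw [e1]
      simp only [Fin.sum_univ_two, Complex.normSq_mul, Complex.normSq_ofReal,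
        Matrix.cons_val_zero, Matrix.cons_val_one, Matrix.head_cons, Complex.normSq_neg, r3]
      linarith
    · rw [e2]
      simp only [Fin.sum_univ_two, Complex.normSq_mul, Complex.normSq_ofReal,
        Matrix.cons_val_zero, Matrix.cons_val_one, Matrix.head_cons, Complex.normSq_neg, r3]
      linarith
  · rw [e0]
    funext c
    fin_cases c <;>
      simp [Matrix.mulVec, dotProduct, σy, φvec, Fin.sum_univ_two] <;> ring
  · rw [e2]
    funext c
    fin_cases c <;>
      simp [Matrix.mulVec, dotProduct, σx, φvec, Fin.sum_univ_two] <;> ring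
  · rw [e1]
    funext c
    fin_cases c <;>
      simp [Matrix.mulVec, dotProduct, σz, φvec, Fin.sum_univ_two] <;> ring
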